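/- Let n ≥ 1 and let S be a nonempty set of positive integers. Then for every nonzero x ∈ ℂ, Φ_{D,S,n}(x) = (−1)^{ρ_S(n)} · x^{φ_{D,S}(n)} · Φ_{D,S,n}(1/x), where φ_{D,S}(n) = #{1 ≤ j ≤ n : gcd(j,n) ∈ S} is the degree of Φ_{D,S,n}. Hence Φ_{D,S,n} is antipalindromic when n ∈ S and palindromic when n ∉ S. -/

import Mathlib

open Complex Polynomial Finset

/-- The generalized cyclotomic polynomial `Φ_{D,S,n}(X) = ∏_{1 ≤ j ≤ n, gcd(j,n) ∈ S} (X − ζ_n^j)`. -/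
noncomputable def genCyc (S : Set ℕ) [DecidablePred (· ∈ S)] (n : ℕ) : Polynomial ℂ :=
  ∏ j ∈ (Finset.Icc 1 n).filter (fun j => Nat.gcd j n ∈ S),
    (X - C (Complex.exp (2 * Real.pi * Complex.I / n) ^ j))

/-- The generalized Euler function `φ_{D,S}(n) = #{1 ≤ j ≤ n : gcd(j,n) ∈ S}`. -/
def phiDS (S : Set ℕ) [DecidablePred (· ∈ S)] (n : ℕ) : ℕ :=
  ((Finset.Icc 1 n).filter (fun j => Nat.gcd j n ∈ S)).card

theorem stmt3 (S : Set ℕ) [DecidablePred (· ∈ S)] (hS : S.Nonempty)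
    (hSpos : ∀ m ∈ S, 1 ≤ m) (n : ℕ) (hn : 1 ≤ n) (x : ℂ) (hx : x ≠ 0) :
    (genCyc S n).eval x =
      (-1 : ℂ) ^ (if n ∈ S then 1 else 0 : ℕ) * x ^ phiDS S n * (genCyc S n).eval (1 / x) := by
  classical
  set ζ : ℂ := Complex.exp (2 * Real.pi * Complex.I / n) with hζdef
  have hn0 : (n : ℂ) ≠ 0 := Nat.cast_ne_zero.mpr (by omega)
  have hζn : ζ ^ n = 1 := by
    rw [hζdef, ← Complex.exp_nat_mul,
      show (n : ℂ) * (2 * Real.pi * Complex.I / n) = 2 * Real.pi * Complex.I by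
        field_simp]
    exact Complex.exp_two_pi_mul_I
  set T := (Finset.Icc 1 n).filter (fun j => Nat.gcd j n ∈ S) with hT
  have hmemT : ∀ j, j ∈ T ↔ (1 ≤ j ∧ j ≤ n ∧ Nat.gcd j n ∈ S) := by
    intro j
    simp [hT, Finset.mem_filter, Finset.mem_Icc, and_assoc]
  -- gcd symmetry
  have hg : ∀ j, 1 ≤ j → j ≤ n → Nat.gcd (n - j) n = Nat.gcd j n := by
    intro j h1 h2
    have e1 := Nat.gcd_sub_self_right (m := n - j) (n := n) (Nat.sub_le n j)
    rw [show n - (n - j) = j by omega] at e1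
    calc Nat.gcd (n - j) n = Nat.gcd (n - j) j := e1.symm
      _ = Nat.gcd j (n - j) := Nat.gcd_comm _ _
      _ = Nat.gcd j n := Nat.gcd_sub_self_right h2
  -- the involution τ
  have hτT : ∀ j ∈ T, n - j % n ∈ T := by
    intro j hj
    rw [hmemT] at hj ⊢
    obtain ⟨h1, h2, h3⟩ := hj
    rcases eq_or_lt_of_le h2 with rfl | hlt
    · rw [Nat.mod_self, Nat.sub_zero]; exact ⟨h1, le_refl _, h3⟩
    · have hm : j % n = j := Nat.mod_eq_of_lt hlt
      rw [hm]
      exact ⟨by omega, by omega, by rw [hg j h1 h2]; exact h3⟩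
  have hττ : ∀ j ∈ T, n - (n - j % n) % n = j := by
    intro j hj
    rw [hmemT] at hj
    obtain ⟨h1, h2, -⟩ := hj
    rcases eq_or_lt_of_le h2 with rfl | hlt
    · simp [Nat.mod_self]
    · have hm : j % n = j := Nat.mod_eq_of_lt hlt
      rw [hm, Nat.mod_eq_of_lt (by omega)]
      omega
  have hpow : ∀ j ∈ T, ζ ^ (n - j % n) * ζ ^ j = 1 := by
    intro j hj
    have h1 : j % n < n := Nat.mod_lt _ (by omega)
    have e : n - j % n + j = n + n * (j / n) := by
      have e2 := Nat.div_add_mod j n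
      generalize n * (j / n) = p at e2 ⊢
      omega
    rw [← pow_add, e, pow_add, pow_mul, hζn, one_pow, mul_one]
  -- the sign product
  have hErase : ∏ j ∈ T.erase n, (-ζ ^ j) = 1 := by
    refine Finset.prod_involution (fun a _ => n - a) ?_ ?_ ?_ ?_
    · intro a ha
      have hb : 1 ≤ a ∧ a < n := by
        have := (Finset.mem_erase.mp ha)
        have := (hmemT a).mp this.2
        omega
      rw [neg_mul_neg, ← pow_add, show a + (n - a) = n by omega, hζn]
    · intro a ha hfa heq
      apply hfa
      have hb : 1 ≤ a ∧ a < n := by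
        have := (Finset.mem_erase.mp ha)
        have := (hmemT a).mp this.2
        omega
      replace heq : n - a = a := heq
      have h2a : n = 2 * a := by omega
      have : ζ ^ a = -1 := by
        rw [hζdef, ← Complex.exp_nat_mul,
          show (a : ℂ) * (2 * Real.pi * Complex.I / n) = Real.pi * Complex.I by
            rw [h2a]; push_cast
            have ha0 : (a : ℂ) ≠ 0 := Nat.cast_ne_zero.mpr (by omega)
            field_simp]
        exact Complex.exp_pi_mul_I
      rw [this, neg_neg]
    · intro a ha
      have hmem := (Finset.mem_erase.mp ha)
      have hb := (hmemT a).mp hmem.2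
      have hlt : a < n := by
        rcases eq_or_lt_of_le hb.2.1 with rfl | h
        · exact absurd rfl hmem.1
        · exact h
      show n - a ∈ T.erase n
      rw [Finset.mem_erase]
      constructor
      · omega
      · rw [hmemT]
        exact ⟨by omega, by omega, by rw [hg a hb.1 (by omega)]; exact hb.2.2⟩
    · intro a ha
      have hmem := (Finset.mem_erase.mp ha)
      have hb := (hmemT a).mp hmem.2
      show n - (n - a) = a
      omega
  have hsign : ∏ j ∈ T, (-ζ ^ j) = (-1 : ℂ) ^ (if n ∈ S then 1 else 0 : ℕ) := by
    by_cases hnS : n ∈ S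
    · have hnT : n ∈ T := (hmemT n).mpr ⟨hn, le_refl n, by rwa [Nat.gcd_self]⟩
      rw [← Finset.mul_prod_erase T _ hnT, hErase, mul_one, hζn, if_pos hnS, pow_one]
    · have hnT : n ∉ T := by
        rw [hmemT]
        rintro ⟨-, -, h⟩
        rw [Nat.gcd_self] at h
        exact hnS h
      rw [← Finset.erase_eq_of_notMem hnT, hErase, if_neg hnS, pow_zero]
  -- now the main computation
  have hcard : phiDS S n = T.card := rfl
  rw [genCyc, phiDS]
  simp only [eval_prod, eval_sub, eval_X, eval_C, one_div]
  rw [show ((Finset.Icc 1 n).filter (fun j => Nat.gcd j n ∈ S)) = T from rfl]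
  rw [← hζdef]
  have step1 : x ^ T.card * ∏ j ∈ T, (x⁻¹ - ζ ^ j) = ∏ j ∈ T, (1 - x * ζ ^ j) := by
    rw [← Finset.prod_const, ← Finset.prod_mul_distrib]
    refine Finset.prod_congr rfl fun j hj => ?_
    rw [mul_sub, mul_inv_cancel₀ hx]
  have step2 : ∏ j ∈ T, (1 - x * ζ ^ j) =
      ∏ j ∈ T, ((-ζ ^ j) * (x - ζ ^ (n - j % n))) := by
    refine Finset.prod_congr rfl fun j hj => ?_
    have h := hpow j hj
    linear_combination -h
  have step3 : ∏ j ∈ T, (x - ζ ^ (n - j % n)) = ∏ j ∈ T, (x - ζ ^ j) := by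
    refine Finset.prod_nbij' (fun j => n - j % n) (fun j => n - j % n)
      hτT hτT hττ hττ (fun a _ => rfl)
  rw [mul_assoc, step1, step2, Finset.prod_mul_distrib, step3, hsign, ← mul_assoc]
  rw [show ((-1 : ℂ) ^ (if n ∈ S then 1 else 0 : ℕ) * (-1 : ℂ) ^ (if n ∈ S then 1 else 0 : ℕ)) = 1 by
    rcases ite_eq_or_eq (n ∈ S) 1 0 with h | h <;> rw [h] <;> norm_num]
  rw [one_mul]
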